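/- Let E be a directed graph with finitely many vertices, let u and v be distinct vertices with at least one edge from u to v, and suppose u supports a loop. Let F be the graph obtained from E by the column addition B_F = B_E · E_{u,v} (where E_{u,v} is the elementary matrix adding column u to column v of B_E = A_E − I). Then for all vertices w, w' of E, there exists a path from w to w' in E if and only if there exists a path from w to w' in F. -/
import Mathlib


/-- The one-step edge relation of a directed graph with edge set `E`,
source map `s` and range map `r`. -/
def gStep {V E : Type} (s r : E → V) : V → V → Prop :=
  fun x y => ∃ e : E, s e = x ∧ r e = y

/-- Column addition preserves reachability: let `E` be a graph with finitely
many vertices, `u ≠ v` with an edge `f` from `u` to `v`, and suppose `u`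
supports a loop.  Form `F` by removing `f` and adding, for each edge `e` into
`u`, a new edge `ē` from `s(e)` to `v`.  Then for all `w, w'` there is a path
(possibly empty) from `w` to `w'` in `E` iff there is one in `F`. -/
theorem stmt_12 (V E : Type) [Fintype V] (s r : E → V)
    (u v : V) (huv : u ≠ v) (f : E) (hsf : s f = u) (hrf : r f = v)
    (hloop : ∃ e : E, s e = u ∧ r e = u) (w w' : V) :
    Relation.ReflTransGen (gStep s r) w w' ↔
      Relation.ReflTransGen
        (fun x y =>
          (∃ e : E, e ≠ f ∧ s e = x ∧ r e = y) ∨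
          (∃ e : E, r e = u ∧ s e = x ∧ y = v)) w w' := by
  constructor
  · intro h
    induction h with
    | refl => exact .refl
    | tail _ hstep ih =>
      obtain ⟨e, hse, hre⟩ := hstep
      by_cases he : e = f
      · subst he
        obtain ⟨g, hg1, hg2⟩ := hloop
        exact ih.tail (Or.inr ⟨g, hg2, by rw [hg1, ← hsf, hse], by rw [← hre, hrf]⟩)
      · exact ih.tail (Or.inl ⟨e, he, hse, hre⟩)
  · intro h
    induction h with
    | refl => exact .refl
    | tail _ hstep ih =>
      rcases hstep with ⟨e, _, hse, hre⟩ | ⟨e, hreu, hse, hy⟩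
      · exact ih.tail ⟨e, hse, hre⟩
      · subst hy
        exact (ih.tail ⟨e, hse, hreu⟩).tail ⟨f, hsf, hrf⟩
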